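/- Let B be a graph that contains at least t connected components which are trees, each of these trees having at most m₀ edges, where t and m₀ are positive integers. Then there exists a subset of the tree components of B whose union F satisfies t ≤ |V(F)| ≤ t + m₀ and (number of edges of F) − (number of vertices of F) ≥ −t. -/

import Mathlib

/-- `D` is an orientation of the simple graph `G`: every arc lies on an edge of `G`,
and every edge of `G` gets exactly one direction. -/
def IsOrientation {V : Type*} (G : SimpleGraph V) (D : V → V → Prop) : Prop :=
  (∀ u v, D u v → G.Adj u v) ∧ (∀ u v, G.Adj u v → (D u v ↔ ¬ D v u))

/-- The directed distance from `u` to `v` in the digraph `D` is at most 2. -/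
def DistLE2 {V : Type*} (D : V → V → Prop) (u v : V) : Prop :=
  D u v ∨ ∃ w, D u w ∧ D w v

/-- `D` is an orientation of the subgraph of `G` induced by `W`. -/
def IsOrientationOn {V : Type*} (G : SimpleGraph V) (W : Set V) (D : V → V → Prop) : Prop :=
  (∀ u v, D u v → u ∈ W ∧ v ∈ W ∧ G.Adj u v) ∧
  (∀ u v, u ∈ W → v ∈ W → G.Adj u v → (D u v ↔ ¬ D v u))

open SimpleGraph Finset

section Aux

variable {V : Type*} (B : SimpleGraph V)

/-- Edges of `B` with both endpoints in `s`. -/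
private def Es (s : Set V) : Set (Sym2 V) := {e | e ∈ B.edgeSet ∧ ∀ v ∈ e, v ∈ s}

private lemma card_Es (s : Set V) :
    Nat.card (B.induce s).edgeSet = Nat.card (Es B s) := by
  have hinj : Function.Injective
      (fun e : (B.induce s).edgeSet => Sym2.map (Subtype.val : s → V) e.val) := by
    intro a b h
    exact Subtype.ext (Sym2.map.injective Subtype.val_injective h)
  have hr : Set.range (fun e : (B.induce s).edgeSet => Sym2.map (Subtype.val : s → V) e.val)
      = Es B s := by
    ext e
    constructor
    · rintro ⟨⟨e', he'⟩, rfl⟩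
      induction e' using Sym2.ind with
      | _ u v =>
        simp only [SimpleGraph.mem_edgeSet] at he'
        have hadj : B.Adj ↑u ↑v := he'
        refine ⟨by simpa using hadj, ?_⟩
        intro x hx
        simp only [Sym2.map_pair_eq, Sym2.mem_iff] at hx
        rcases hx with rfl | rfl
        exacts [u.2, v.2]
    · rintro ⟨he, hmem⟩
      induction e using Sym2.ind with
      | _ u v =>
        have hu : u ∈ s := hmem u (Sym2.mem_mk_left u v)
        have hv : v ∈ s := hmem v (Sym2.mem_mk_right u v)
        refine ⟨⟨s(⟨u, hu⟩, ⟨v, hv⟩), ?_⟩, ?_⟩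
        · simpa using he
        · simp [Sym2.map_pair_eq]
  calc Nat.card (B.induce s).edgeSet
      = Nat.card (Set.range (fun e : (B.induce s).edgeSet =>
          Sym2.map (Subtype.val : s → V) e.val)) := (Nat.card_range_of_injective hinj).symm
    _ = Nat.card (Es B s) := by rw [hr]

private lemma adj_supp {u v : V} {c : B.ConnectedComponent}
    (hu : u ∈ c.supp) (h : B.Adj u v) : v ∈ c.supp := by
  rw [ConnectedComponent.mem_supp_iff] at hu ⊢
  rw [← hu]
  exact (ConnectedComponent.connectedComponentMk_eq_of_adj h).symm

variable [Fintype V]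

private lemma card_W (T : Finset B.ConnectedComponent) :
    Nat.card {v : V | ∃ c ∈ T, v ∈ c.supp} = ∑ c ∈ T, Nat.card c.supp ∧
    Nat.card (Es B {v : V | ∃ c ∈ T, v ∈ c.supp})
      = ∑ c ∈ T, Nat.card (Es B c.supp) := by
  classical
  induction T using Finset.induction with
  | empty =>
    constructor
    · simp
    · have hset : {v : V | ∃ c ∈ (∅ : Finset B.ConnectedComponent), v ∈ c.supp}
          = (∅ : Set V) := by simp
      rw [hset]
      have hE0 : Es B (∅ : Set V) = ∅ := by
        ext e
        simp only [Set.mem_empty_iff_false, iff_false]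
        rintro ⟨he, hmem⟩
        induction e using Sym2.ind with
        | _ u v =>
          have := hmem u (Sym2.mem_mk_left u v)
          simp at this
      rw [hE0, Nat.card_coe_set_eq, Set.ncard_empty, Finset.sum_empty]
  | insert _ _ ha ih =>
    rename_i a T'
    have hW : {v : V | ∃ c ∈ insert a T', v ∈ c.supp}
        = a.supp ∪ {v : V | ∃ c ∈ T', v ∈ c.supp} := by
      ext v
      simp only [Set.mem_setOf_eq, Finset.mem_insert, Set.mem_union]
      constructor
      · rintro ⟨c, hc | hc, hv⟩
        · left; exact hc ▸ hv
        · right; exact ⟨c, hc, hv⟩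
      · rintro (hv | ⟨c, hc, hv⟩)
        · exact ⟨a, Or.inl rfl, hv⟩
        · exact ⟨c, Or.inr hc, hv⟩
    have hdis : Disjoint a.supp {v : V | ∃ c ∈ T', v ∈ c.supp} := by
      rw [Set.disjoint_left]
      rintro v hv ⟨c, hc, hvc⟩
      rw [ConnectedComponent.mem_supp_iff] at hv hvc
      exact ha (by rw [← hv, hvc]; exact hc)
    constructor
    · rw [hW, Nat.card_coe_set_eq, Set.ncard_union_eq hdis (Set.toFinite _) (Set.toFinite _),
        Finset.sum_insert ha, ← Nat.card_coe_set_eq, ← Nat.card_coe_set_eq, ih.1]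
    · have hEs : Es B (a.supp ∪ {v : V | ∃ c ∈ T', v ∈ c.supp})
          = Es B a.supp ∪ Es B {v : V | ∃ c ∈ T', v ∈ c.supp} := by
        ext e
        constructor
        · rintro ⟨he, hmem⟩
          induction e using Sym2.ind with
          | _ u v =>
            have hadj : B.Adj u v := he
            rcases hmem u (Sym2.mem_mk_left u v) with hu | hu
            · left
              refine ⟨he, ?_⟩
              intro x hx
              rw [Sym2.mem_iff] at hx
              rcases hx with rfl | rfl
              · exact hu
              · exact adj_supp B hu hadj
            · right
              obtain ⟨c, hc, huc⟩ := hu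
              refine ⟨he, ?_⟩
              intro x hx
              rw [Sym2.mem_iff] at hx
              rcases hx with rfl | rfl
              · exact ⟨c, hc, huc⟩
              · exact ⟨c, hc, adj_supp B huc hadj⟩
        · rintro (⟨he, hmem⟩ | ⟨he, hmem⟩)
          · exact ⟨he, fun x hx => Or.inl (hmem x hx)⟩
          · exact ⟨he, fun x hx => Or.inr (hmem x hx)⟩
      have hdisE : Disjoint (Es B a.supp) (Es B {v : V | ∃ c ∈ T', v ∈ c.supp}) := by
        rw [Set.disjoint_left]
        rintro e ⟨he, hmem⟩ ⟨he', hmem'⟩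
        induction e using Sym2.ind with
        | _ u v =>
          exact Set.disjoint_left.mp hdis (hmem u (Sym2.mem_mk_left u v))
            (hmem' u (Sym2.mem_mk_left u v))
      rw [hW, hEs, Nat.card_coe_set_eq,
        Set.ncard_union_eq hdisE (Set.toFinite _) (Set.toFinite _),
        Finset.sum_insert ha, ← Nat.card_coe_set_eq, ← Nat.card_coe_set_eq, ih.2]

end Aux

private lemma greedy {α : Type*} [DecidableEq α] (t m₀ : ℕ) (ht : 1 ≤ t)
    (S : Finset α) (n : α → ℕ)
    (h1 : ∀ c ∈ S, 1 ≤ n c) (h2 : ∀ c ∈ S, n c ≤ m₀ + 1) (hS : t ≤ S.card) :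
    ∃ T ⊆ S, T.Nonempty ∧ T.card ≤ t ∧ t ≤ ∑ c ∈ T, n c ∧ ∑ c ∈ T, n c ≤ t + m₀ := by
  have hcard_le : ∀ T : Finset α, T ⊆ S → T.card ≤ ∑ c ∈ T, n c := by
    intro T hT
    calc T.card = ∑ _c ∈ T, 1 := by simp
    _ ≤ ∑ c ∈ T, n c := Finset.sum_le_sum (fun c hc => h1 c (hT hc))
  have hSc : S ∈ (S.powerset.filter (fun T => t ≤ ∑ c ∈ T, n c)) := by
    simp only [Finset.mem_filter, Finset.mem_powerset]
    exact ⟨le_refl S, le_trans hS (hcard_le S (le_refl S))⟩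
  obtain ⟨T, hTmem, hmin⟩ := Finset.exists_min_image _ (fun T => ∑ c ∈ T, n c) ⟨S, hSc⟩
  simp only [Finset.mem_filter, Finset.mem_powerset] at hTmem
  obtain ⟨hTS, hTt⟩ := hTmem
  have hTne : T.Nonempty := by
    rcases T.eq_empty_or_nonempty with rfl | h
    · simp at hTt; omega
    · exact h
  obtain ⟨c, hc⟩ := hTne
  have hsum : ∑ x ∈ T.erase c, n x + n c = ∑ x ∈ T, n x := Finset.sum_erase_add T n hc
  have herase : ¬ t ≤ ∑ x ∈ T.erase c, n x := by
    intro hcon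
    have hmem : T.erase c ∈ (S.powerset.filter (fun T => t ≤ ∑ c ∈ T, n c)) := by
      simp only [Finset.mem_filter, Finset.mem_powerset]
      exact ⟨le_trans (Finset.erase_subset c T) hTS, hcon⟩
    have := hmin _ hmem
    have h1c := h1 c (hTS hc)
    omega
  have hcc : (T.erase c).card ≤ ∑ x ∈ T.erase c, n x :=
    hcard_le _ (le_trans (Finset.erase_subset c T) hTS)
  have hcardT : T.card = (T.erase c).card + 1 := by
    rw [Finset.card_erase_of_mem hc]
    have := Finset.card_pos.mpr ⟨c, hc⟩
    omega
  exact ⟨T, hTS, ⟨c, hc⟩, by omega, hTt, by have := h2 c (hTS hc); omega⟩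

/-- If `B` has at least `t` tree components, each with at most `m₀` edges, then some
subset of these tree components forms a forest `F` with `t ≤ |V(F)| ≤ t + m₀` and
`ex(F) ≥ -t`. -/
theorem stmt11 {V : Type*} [Fintype V] (B : SimpleGraph V) (t m₀ : ℕ)
    (ht : 1 ≤ t) (hm₀ : 1 ≤ m₀)
    (S : Finset B.ConnectedComponent)
    (hS : ∀ c ∈ S, (B.induce c.supp).IsTree ∧ Nat.card (B.induce c.supp).edgeSet ≤ m₀)
    (hScard : t ≤ S.card) :
    ∃ T ⊆ S, T.Nonempty ∧
      t ≤ Nat.card {v : V | ∃ c ∈ T, v ∈ c.supp} ∧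
      Nat.card {v : V | ∃ c ∈ T, v ∈ c.supp} ≤ t + m₀ ∧
      -(t : ℤ) ≤ (Nat.card (B.induce {v : V | ∃ c ∈ T, v ∈ c.supp}).edgeSet : ℤ)
        - (Nat.card {v : V | ∃ c ∈ T, v ∈ c.supp} : ℤ) := by
  classical
  set n : B.ConnectedComponent → ℕ := fun c => Nat.card c.supp with hn
  have key : ∀ c ∈ S, Nat.card (B.induce c.supp).edgeSet + 1 = n c := by
    intro c hc
    haveI : Fintype ↥c.supp := Fintype.ofFinite _
    haveI : Fintype (B.induce c.supp).edgeSet := Fintype.ofFinite _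
    have h := (hS c hc).1.card_edgeFinset
    show Nat.card (B.induce c.supp).edgeSet + 1 = Nat.card c.supp
    rw [Nat.card_eq_fintype_card, Nat.card_eq_fintype_card, ← SimpleGraph.edgeFinset_card]
    exact h
  have h1 : ∀ c ∈ S, 1 ≤ n c := fun c hc => by have := key c hc; omega
  have h2 : ∀ c ∈ S, n c ≤ m₀ + 1 := fun c hc => by
    have := key c hc; have := (hS c hc).2; omega
  obtain ⟨T, hTS, hTne, hTcard, hTsum₁, hTsum₂⟩ := greedy t m₀ ht S n h1 h2 hScard
  have hcw := card_W B T
  refine ⟨T, hTS, hTne, ?_, ?_, ?_⟩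
  · rw [hcw.1]; exact hTsum₁
  · rw [hcw.1]; exact hTsum₂
  · have hE : Nat.card (B.induce {v : V | ∃ c ∈ T, v ∈ c.supp}).edgeSet
        = ∑ c ∈ T, Nat.card (B.induce c.supp).edgeSet := by
      rw [card_Es, hcw.2]
      exact Finset.sum_congr rfl (fun c _ => (card_Es B c.supp).symm)
    rw [hE, hcw.1]
    have : ((∑ c ∈ T, Nat.card (B.induce c.supp).edgeSet : ℕ) : ℤ)
        - ((∑ c ∈ T, n c : ℕ) : ℤ) = ∑ c ∈ T, (((Nat.card (B.induce c.supp).edgeSet : ℤ)) - (n c : ℤ)) := by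
      push_cast
      rw [Finset.sum_sub_distrib]
    rw [this]
    have heq : ∀ c ∈ T, ((Nat.card (B.induce c.supp).edgeSet : ℤ)) - (n c : ℤ) = -1 := by
      intro c hc
      have := key c (hTS hc)
      omega
    have hsum2 : (∑ c ∈ T, (((Nat.card (B.induce c.supp).edgeSet : ℤ)) - (n c : ℤ)))
        = -(T.card : ℤ) := by
      rw [Finset.sum_congr rfl heq]
      simp
    rw [hsum2]
    exact neg_le_neg (by exact_mod_cast hTcard)
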